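/- arXiv:2507.03712 — 2 statements merged into one kernel-verified Lean document; each statement's English description precedes it below -/
import Mathlib

section
/- Under the hypotheses of the adjoint error identity for a semi-explicit DAE (true solution (y,z) with ẏ = f(y,z), g(y,z) = 0; approximate solution (Y,Z); adjoint pair (φ^{(y)}, φ^{(z)}) solving the adjoint DAE with data (ψ^y, ψ^z)), if additionally the adjoint terminal condition φ^{(y)}(T) = 0 holds, then the cumulative quantity-of-interest error satisfies ∫₀ᵀ (e^{(y)}, ψ^y) dt + ∫₀ᵀ (e^{(z)}, ψ^z) dt = (φ^{(y)}(0), e^{(y)}(0)) + ∫₀ᵀ (φ^{(y)}, f(Y,Z) - Ẏ) dt + ∫₀ᵀ (φ^{(z)}, g(Y,Z)) dt. -/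
open Matrix MeasureTheory

/-- The averaged Jacobian matrix `∫₀¹ DF(s) (c s) ds`. -/
noncomputable def avgJac {p q : ℕ} (F : ℝ → (Fin p → ℝ) → (Fin q → ℝ))
    (c : ℝ → Fin p → ℝ) : Matrix (Fin q) (Fin p) ℝ :=
  LinearMap.toMatrix'
    ((∫ s in (0:ℝ)..1, fderiv ℝ (F s) (c s)).toLinearMap)

/-- Derivative of a dot product of two curves. -/
lemma hasDerivAt_dotProduct' {k : ℕ} {u v : ℝ → Fin k → ℝ} {u' v' : Fin k → ℝ} {t : ℝ}
    (hu : HasDerivAt u u' t) (hv : HasDerivAt v v' t) :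
    HasDerivAt (fun t => u t ⬝ᵥ v t) (u' ⬝ᵥ v t + u t ⬝ᵥ v') t := by
  have hui := hasDerivAt_pi.1 hu
  have hvi := hasDerivAt_pi.1 hv
  simp only [dotProduct]
  rw [← Finset.sum_add_distrib]
  exact HasDerivAt.fun_sum fun i _ => (hui i).fun_mul (hvi i)

lemma trdot {p q : ℕ} (M : Matrix (Fin p) (Fin q) ℝ) (u : Fin p → ℝ) (w : Fin q → ℝ) :
    (Mᵀ *ᵥ u) ⬝ᵥ w = u ⬝ᵥ (M *ᵥ w) := by
  rw [Matrix.mulVec_transpose, ← Matrix.dotProduct_mulVec]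

/-- Mean value form with averaged Jacobians. -/
lemma avg_mvt {p q r : ℕ} (f : (Fin p → ℝ) × (Fin q → ℝ) → Fin r → ℝ)
    (hf : ContDiff ℝ 1 f) (a A : Fin p → ℝ) (b B : Fin q → ℝ) :
    f (a, b) - f (A, B)
      = (avgJac (fun s y' => f (y', s • b + (1 - s) • B)) (fun s => s • a + (1 - s) • A))
          *ᵥ (a - A)
        + (avgJac (fun s z' => f (s • a + (1 - s) • A, z')) (fun s => s • b + (1 - s) • B))
          *ᵥ (b - B) := by
  set c : ℝ → Fin p → ℝ := fun s => s • a + (1 - s) • A with hc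
  set d : ℝ → Fin q → ℝ := fun s => s • b + (1 - s) • B with hd
  have hcd : ∀ s : ℝ, HasDerivAt c (a - A) s := by
    intro s
    have h1 : HasDerivAt (fun s : ℝ => s • a) ((1 : ℝ) • a) s := (hasDerivAt_id s).smul_const a
    have h2 : HasDerivAt (fun s : ℝ => (1 - s) • A) (((0 : ℝ) - 1) • A) s :=
      ((hasDerivAt_const s (1 : ℝ)).sub (hasDerivAt_id s)).smul_const A
    simpa [hc, sub_eq_add_neg] using h1.fun_add h2
  have hdd : ∀ s : ℝ, HasDerivAt d (b - B) s := by
    intro s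
    have h1 : HasDerivAt (fun s : ℝ => s • b) ((1 : ℝ) • b) s := (hasDerivAt_id s).smul_const b
    have h2 : HasDerivAt (fun s : ℝ => (1 - s) • B) (((0 : ℝ) - 1) • B) s :=
      ((hasDerivAt_const s (1 : ℝ)).sub (hasDerivAt_id s)).smul_const B
    simpa [hd, sub_eq_add_neg] using h1.fun_add h2
  have hccont : Continuous c := by
    apply Continuous.add
    · exact (continuous_id.smul continuous_const)
    · exact ((continuous_const.sub continuous_id).smul continuous_const)
  have hdcont : Continuous d := by
    apply Continuous.add
    · exact (continuous_id.smul continuous_const)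
    · exact ((continuous_const.sub continuous_id).smul continuous_const)
  have hfd : ∀ x, HasFDerivAt f (fderiv ℝ f x) x := fun x =>
    ((hf.differentiable one_ne_zero) x).hasFDerivAt
  have hγ : ∀ s : ℝ, HasDerivAt (fun s => (c s, d s)) (a - A, b - B) s := fun s =>
    (hcd s).prodMk (hdd s)
  have key : ∀ s : ℝ, HasDerivAt (fun s => f (c s, d s))
      ((fderiv ℝ f (c s, d s)) (a - A, b - B)) s := fun s =>
    (hfd (c s, d s)).comp_hasDerivAt s (hγ s)
  have hFcont : Continuous fun s => fderiv ℝ f (c s, d s) :=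
    (hf.continuous_fderiv one_ne_zero).comp (hccont.prodMk hdcont)
  have ftc : (∫ s in (0:ℝ)..1, (fderiv ℝ f (c s, d s)) (a - A, b - B))
      = f (a, b) - f (A, B) := by
    have h := intervalIntegral.integral_eq_sub_of_hasDerivAt
      (f := fun s => f (c s, d s)) (f' := fun s => (fderiv ℝ f (c s, d s)) (a - A, b - B))
      (fun t _ => key t)
      ((hFcont.clm_apply continuous_const).intervalIntegrable 0 1)
    have hc1 : c 1 = a := by simp [hc]
    have hc0 : c 0 = A := by simp [hc]
    have hd1 : d 1 = b := by simp [hd]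
    have hd0 : d 0 = B := by simp [hd]
    rw [h]
    simp only [hc1, hc0, hd1, hd0]
  -- identify the partial Jacobians
  have hL : ∀ s : ℝ, fderiv ℝ (fun y' => f (y', d s)) (c s)
      = (fderiv ℝ f (c s, d s)).comp (ContinuousLinearMap.inl ℝ _ _) := fun s =>
    ((hfd (c s, d s)).comp (c s) (hasFDerivAt_prodMk_left (c s) (d s))).fderiv
  have hR : ∀ s : ℝ, fderiv ℝ (fun z' => f (c s, z')) (d s)
      = (fderiv ℝ f (c s, d s)).comp (ContinuousLinearMap.inr ℝ _ _) := fun s =>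
    ((hfd (c s, d s)).comp (d s) (hasFDerivAt_prodMk_right (c s) (d s))).fderiv
  have happL : (avgJac (fun s y' => f (y', d s)) c) *ᵥ (a - A)
      = ∫ s in (0:ℝ)..1, (fderiv ℝ f (c s, d s)) (a - A, 0) := by
    have hint : Integrable (fun s => fderiv ℝ (fun y' => f (y', d s)) (c s))
        (volume.restrict (Set.Ioc (0:ℝ) 1)) := by
      apply Continuous.integrableOn_Ioc
      simp only [hL]
      exact (hFcont.clm_comp continuous_const)
    rw [avgJac, ← Matrix.toLin'_apply, Matrix.toLin'_toMatrix']
    rw [ContinuousLinearMap.coe_coe, intervalIntegral.integral_of_le zero_le_one,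
      intervalIntegral.integral_of_le zero_le_one]
    rw [ContinuousLinearMap.integral_apply hint]
    refine setIntegral_congr_fun measurableSet_Ioc fun s _ => ?_
    rw [hL s]
    simp
  have happR : (avgJac (fun s z' => f (c s, z')) d) *ᵥ (b - B)
      = ∫ s in (0:ℝ)..1, (fderiv ℝ f (c s, d s)) (0, b - B) := by
    have hint : Integrable (fun s => fderiv ℝ (fun z' => f (c s, z')) (d s))
        (volume.restrict (Set.Ioc (0:ℝ) 1)) := by
      apply Continuous.integrableOn_Ioc
      simp only [hR]
      exact (hFcont.clm_comp continuous_const)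
    rw [avgJac, ← Matrix.toLin'_apply, Matrix.toLin'_toMatrix']
    rw [ContinuousLinearMap.coe_coe, intervalIntegral.integral_of_le zero_le_one,
      intervalIntegral.integral_of_le zero_le_one]
    rw [ContinuousLinearMap.integral_apply hint]
    refine setIntegral_congr_fun measurableSet_Ioc fun s _ => ?_
    rw [hR s]
    simp
  rw [happL, happR, ← ftc]
  rw [← intervalIntegral.integral_add
    ((hFcont.clm_apply continuous_const).intervalIntegrable 0 1)
    ((hFcont.clm_apply continuous_const).intervalIntegrable 0 1)]
  refine intervalIntegral.integral_congr fun s _ => ?_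
  rw [← map_add]
  congr 1
  simp [Prod.ext_iff]

lemma continuous_dot {k : ℕ} {u v : ℝ → Fin k → ℝ} (hu : Continuous u) (hv : Continuous v) :
    Continuous fun t => u t ⬝ᵥ v t := by
  simp only [dotProduct]
  exact continuous_finset_sum _ fun i _ =>
    ((continuous_apply i).comp hu).mul ((continuous_apply i).comp hv)

/-- Adjoint error identity (Lemma `adj_error`) for a semi-explicit DAE. -/
theorem adjoint_dae_cumulative_qoi_error {n m : ℕ} (T : ℝ) (hT : 0 < T)
    (f : (Fin n → ℝ) × (Fin m → ℝ) → (Fin n → ℝ))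
    (g : (Fin n → ℝ) × (Fin m → ℝ) → (Fin m → ℝ))
    (hf : ContDiff ℝ 1 f) (hg : ContDiff ℝ 1 g)
    (y Y Y' ψy φy : ℝ → Fin n → ℝ) (z Z ψz φz : ℝ → Fin m → ℝ)
    (fby : ℝ → Matrix (Fin n) (Fin n) ℝ) (fbz : ℝ → Matrix (Fin n) (Fin m) ℝ)
    (gby : ℝ → Matrix (Fin m) (Fin n) ℝ) (gbz : ℝ → Matrix (Fin m) (Fin m) ℝ)
    -- the averaged Jacobians along the segment between (y,z) and (Y,Z)
    (hfby : ∀ t, fby t = avgJac (fun s y' => f (y', s • z t + (1 - s) • Z t))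
      (fun s => s • y t + (1 - s) • Y t))
    (hfbz : ∀ t, fbz t = avgJac (fun s z' => f (s • y t + (1 - s) • Y t, z'))
      (fun s => s • z t + (1 - s) • Z t))
    (hgby : ∀ t, gby t = avgJac (fun s y' => g (y', s • z t + (1 - s) • Z t))
      (fun s => s • y t + (1 - s) • Y t))
    (hgbz : ∀ t, gbz t = avgJac (fun s z' => g (s • y t + (1 - s) • Y t, z'))
      (fun s => s • z t + (1 - s) • Z t))
    -- the true solution of the DAE
    (hy : ∀ t ∈ Set.Icc (0:ℝ) T, HasDerivAt y (f (y t, z t)) t)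
    (hcon : ∀ t ∈ Set.Icc (0:ℝ) T, g (y t, z t) = 0)
    -- the approximate solution and its derivative
    (hY : ∀ t ∈ Set.Icc (0:ℝ) T, HasDerivAt Y (Y' t) t)
    -- the adjoint DAE
    (hadj1 : ∀ t ∈ Set.Ico (0:ℝ) T,
      HasDerivAt φy (-((fby t)ᵀ *ᵥ φy t + (gby t)ᵀ *ᵥ φz t + ψy t)) t)
    (hadj2 : ∀ t ∈ Set.Ico (0:ℝ) T,
      (fbz t)ᵀ *ᵥ φy t + (gbz t)ᵀ *ᵥ φz t + ψz t = 0)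
    -- sufficient smoothness for the integrals and integration by parts
    (hyc : Continuous y) (hYc : Continuous Y) (hY'c : Continuous Y')
    (hzc : Continuous z) (hZc : Continuous Z)
    (hψyc : Continuous ψy) (hψzc : Continuous ψz)
    (hφyc : Continuous φy) (hφzc : Continuous φz)
    -- adjoint terminal condition
    (hφT : φy T = 0) :
    (∫ t in (0:ℝ)..T, (y t - Y t) ⬝ᵥ ψy t)
      + (∫ t in (0:ℝ)..T, (z t - Z t) ⬝ᵥ ψz t)
    = φy 0 ⬝ᵥ (y 0 - Y 0)
      + (∫ t in (0:ℝ)..T, φy t ⬝ᵥ (f (Y t, Z t) - Y' t))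
      + (∫ t in (0:ℝ)..T, φz t ⬝ᵥ g (Y t, Z t)) := by
  -- the pointwise derivative of t ↦ φy t ⬝ᵥ (y t - Y t)
  set D : ℝ → ℝ := fun t =>
    -((y t - Y t) ⬝ᵥ ψy t) - ((z t - Z t) ⬝ᵥ ψz t)
      + φy t ⬝ᵥ (f (Y t, Z t) - Y' t) + φz t ⬝ᵥ g (Y t, Z t) with hD
  have hmvtf : ∀ t, f (y t, z t) - f (Y t, Z t)
      = fby t *ᵥ (y t - Y t) + fbz t *ᵥ (z t - Z t) := fun t => by
    rw [hfby t, hfbz t]; exact avg_mvt f hf (y t) (Y t) (z t) (Z t)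
  have hmvtg : ∀ t, g (y t, z t) - g (Y t, Z t)
      = gby t *ᵥ (y t - Y t) + gbz t *ᵥ (z t - Z t) := fun t => by
    rw [hgby t, hgbz t]; exact avg_mvt g hg (y t) (Y t) (z t) (Z t)
  have hder : ∀ t ∈ Set.Ioo (0:ℝ) T,
      HasDerivAt (fun t => φy t ⬝ᵥ (y t - Y t)) (D t) t := by
    intro t ht
    have tIcc : t ∈ Set.Icc (0:ℝ) T := ⟨ht.1.le, ht.2.le⟩
    have tIco : t ∈ Set.Ico (0:ℝ) T := ⟨ht.1.le, ht.2⟩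
    have h1 := hasDerivAt_dotProduct' (hadj1 t tIco) ((hy t tIcc).sub (hY t tIcc))
    have heq : (-((fby t)ᵀ *ᵥ φy t + (gby t)ᵀ *ᵥ φz t + ψy t)) ⬝ᵥ (y t - Y t)
        + φy t ⬝ᵥ (f (y t, z t) - Y' t) = D t := by
      have s1 : φy t ⬝ᵥ f (y t, z t)
          = φy t ⬝ᵥ (fby t *ᵥ (y t - Y t)) + φy t ⬝ᵥ (fbz t *ᵥ (z t - Z t))
            + φy t ⬝ᵥ f (Y t, Z t) := by
        have hv : f (y t, z t)
            = fby t *ᵥ (y t - Y t) + fbz t *ᵥ (z t - Z t) + f (Y t, Z t) :=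
          sub_eq_iff_eq_add.mp (hmvtf t)
        rw [hv, dotProduct_add, dotProduct_add]
      have s2 : φz t ⬝ᵥ g (Y t, Z t)
          = -(φz t ⬝ᵥ (gby t *ᵥ (y t - Y t)) + φz t ⬝ᵥ (gbz t *ᵥ (z t - Z t))) := by
        have hv : g (Y t, Z t)
            = -(gby t *ᵥ (y t - Y t) + gbz t *ᵥ (z t - Z t)) := by
          have := hmvtg t
          rw [hcon t tIcc] at this
          linear_combination (norm := module) -this
        rw [hv, dotProduct_neg, dotProduct_add]
      have s3 : φy t ⬝ᵥ (fbz t *ᵥ (z t - Z t)) + φz t ⬝ᵥ (gbz t *ᵥ (z t - Z t))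
          + ψz t ⬝ᵥ (z t - Z t) = 0 := by
        have := congrArg (fun v => v ⬝ᵥ (z t - Z t)) (hadj2 t tIco)
        simp only [add_dotProduct, zero_dotProduct, trdot] at this
        exact this
      have s4 : ψy t ⬝ᵥ (y t - Y t) = (y t - Y t) ⬝ᵥ ψy t := dotProduct_comm _ _
      have s5 : ψz t ⬝ᵥ (z t - Z t) = (z t - Z t) ⬝ᵥ ψz t := dotProduct_comm _ _
      have s6 : φy t ⬝ᵥ (f (y t, z t) - Y' t)
          = φy t ⬝ᵥ f (y t, z t) - φy t ⬝ᵥ Y' t := dotProduct_sub _ _ _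
      have s7 : φy t ⬝ᵥ (f (Y t, Z t) - Y' t)
          = φy t ⬝ᵥ f (Y t, Z t) - φy t ⬝ᵥ Y' t := dotProduct_sub _ _ _
      simp only [hD, neg_dotProduct, add_dotProduct, trdot]
      linear_combination s1 - s2 + s3 - s4 - s5 + s6 - s7
    exact heq ▸ h1
  -- continuity / integrability of the pieces
  have cA : Continuous fun t => (y t - Y t) ⬝ᵥ ψy t := continuous_dot (hyc.sub hYc) hψyc
  have cB : Continuous fun t => (z t - Z t) ⬝ᵥ ψz t := continuous_dot (hzc.sub hZc) hψzc
  have cfYZ : Continuous fun t => f (Y t, Z t) := hf.continuous.comp (hYc.prodMk hZc)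
  have cgYZ : Continuous fun t => g (Y t, Z t) := hg.continuous.comp (hYc.prodMk hZc)
  have cC : Continuous fun t => φy t ⬝ᵥ (f (Y t, Z t) - Y' t) :=
    continuous_dot hφyc (cfYZ.sub hY'c)
  have cE : Continuous fun t => φz t ⬝ᵥ g (Y t, Z t) := continuous_dot hφzc cgYZ
  have cD : Continuous D := ((cA.neg.sub cB).add cC).add cE
  have hΦcont : ContinuousOn (fun t => φy t ⬝ᵥ (y t - Y t)) (Set.Icc 0 T) :=
    (continuous_dot hφyc (hyc.sub hYc)).continuousOn
  have hftc := intervalIntegral.integral_eq_sub_of_hasDerivAt_of_le hT.le hΦcont hder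
    (cD.intervalIntegrable 0 T)
  rw [hφT, zero_dotProduct, zero_sub] at hftc
  -- split the integral of D
  have iA := cA.intervalIntegrable (μ := volume) 0 T
  have iB := cB.intervalIntegrable (μ := volume) 0 T
  have iC := cC.intervalIntegrable (μ := volume) 0 T
  have iE := cE.intervalIntegrable (μ := volume) 0 T
  have hsplit : (∫ t in (0:ℝ)..T, D t)
      = -(∫ t in (0:ℝ)..T, (y t - Y t) ⬝ᵥ ψy t)
        - (∫ t in (0:ℝ)..T, (z t - Z t) ⬝ᵥ ψz t)
        + (∫ t in (0:ℝ)..T, φy t ⬝ᵥ (f (Y t, Z t) - Y' t))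
        + (∫ t in (0:ℝ)..T, φz t ⬝ᵥ g (Y t, Z t)) := by
    simp only [hD]
    rw [intervalIntegral.integral_add
        (((cA.fun_neg.fun_sub cB).fun_add cC).intervalIntegrable (μ := volume) 0 T)
        (cE.intervalIntegrable (μ := volume) 0 T),
      intervalIntegral.integral_add
        ((cA.fun_neg.fun_sub cB).intervalIntegrable (μ := volume) 0 T)
        (cC.intervalIntegrable (μ := volume) 0 T),
      intervalIntegral.integral_sub
        (cA.fun_neg.intervalIntegrable (μ := volume) 0 T)
        (cB.intervalIntegrable (μ := volume) 0 T),
      intervalIntegral.integral_neg]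
  rw [hsplit] at hftc
  linarith [hftc]
end

section
/- Consider the index-reduced ODE system ẏ = f(y,z), ż = h(y,z) with true solution (y,z) and approximation (Y,Z), and let (ν^{(y)}, ν^{(z)}) solve the adjoint ODE -ν̇^{(y)} = f̄_yᵀ ν^{(y)} + h̄_yᵀ ν^{(z)} + ψ^y, -ν̇^{(z)} = f̄_zᵀ ν^{(y)} + h̄_zᵀ ν^{(z)} + ψ^z on [0,T) with terminal conditions ν^{(y)}(T) = ζ^y, ν^{(z)}(T) = ζ^z. Then ∫₀ᵀ (e^{(y)}, ψ^y) dt + ∫₀ᵀ (e^{(z)}, ψ^z) dt + (e^{(y)}(T), ζ^y) + (e^{(z)}(T), ζ^z) = (ν^{(y)}(0), e^{(y)}(0)) + (ν^{(z)}(0), e^{(z)}(0)) + ∫₀ᵀ (ν^{(y)}, f(Y,Z) - Ẏ) dt + ∫₀ᵀ (ν^{(z)}, h(Y,Z) - Ż) dt. -/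
open Matrix MeasureTheory

private lemma dot_mulVec_trans {k l : ℕ} (A : Matrix (Fin k) (Fin l) ℝ)
    (u : Fin k → ℝ) (v : Fin l → ℝ) : (Aᵀ *ᵥ u) ⬝ᵥ v = u ⬝ᵥ (A *ᵥ v) := by
  rw [Matrix.mulVec_transpose, ← Matrix.dotProduct_mulVec]

private lemma hasDerivAt_dot {k : ℕ} {u v : ℝ → Fin k → ℝ} {u' v' : Fin k → ℝ} {t : ℝ}
    (hu : HasDerivAt u u' t) (hv : HasDerivAt v v' t) :
    HasDerivAt (fun s => u s ⬝ᵥ v s) (u' ⬝ᵥ v t + u t ⬝ᵥ v') t := by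
  simp only [dotProduct]
  have := HasDerivAt.sum (fun i (_ : i ∈ Finset.univ) =>
    ((hasDerivAt_pi.mp hu i).mul (hasDerivAt_pi.mp hv i)))
  simpa [Finset.sum_add_distrib, Finset.sum_fn, Pi.mul_def] using this

private lemma cont_dot {k : ℕ} {u v : ℝ → Fin k → ℝ}
    (hu : Continuous u) (hv : Continuous v) : Continuous (fun t => u t ⬝ᵥ v t) := by
  simp only [dotProduct]
  exact continuous_finset_sum _ fun i _ =>
    ((continuous_apply i).comp hu).mul ((continuous_apply i).comp hv)

/-- Error identity for the index-reduced ODE system via the adjoint ODE. -/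
theorem adjoint_ode_error_identity {n m : ℕ} (T : ℝ) (hT : 0 < T)
    (f : (Fin n → ℝ) × (Fin m → ℝ) → (Fin n → ℝ))
    (h : (Fin n → ℝ) × (Fin m → ℝ) → (Fin m → ℝ))
    (hf : ContDiff ℝ 1 f) (hh : ContDiff ℝ 1 h)
    (y Y Y' ψy νy : ℝ → Fin n → ℝ) (z Z Z' ψz νz : ℝ → Fin m → ℝ)
    (ζy : Fin n → ℝ) (ζz : Fin m → ℝ)
    (fby : ℝ → Matrix (Fin n) (Fin n) ℝ) (fbz : ℝ → Matrix (Fin n) (Fin m) ℝ)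
    (hby : ℝ → Matrix (Fin m) (Fin n) ℝ) (hbz : ℝ → Matrix (Fin m) (Fin m) ℝ)
    -- the averaged Jacobians satisfy the linearization identities
    (hlinf : ∀ t, fby t *ᵥ (y t - Y t) + fbz t *ᵥ (z t - Z t)
      = f (y t, z t) - f (Y t, Z t))
    (hlinh : ∀ t, hby t *ᵥ (y t - Y t) + hbz t *ᵥ (z t - Z t)
      = h (y t, z t) - h (Y t, Z t))
    -- the true solution of the index-reduced ODE system
    (hy : ∀ t ∈ Set.Icc (0:ℝ) T, HasDerivAt y (f (y t, z t)) t)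
    (hz : ∀ t ∈ Set.Icc (0:ℝ) T, HasDerivAt z (h (y t, z t)) t)
    -- the approximate solution and its derivatives
    (hY : ∀ t ∈ Set.Icc (0:ℝ) T, HasDerivAt Y (Y' t) t)
    (hZ : ∀ t ∈ Set.Icc (0:ℝ) T, HasDerivAt Z (Z' t) t)
    -- the adjoint ODE system
    (hadj1 : ∀ t ∈ Set.Ico (0:ℝ) T,
      HasDerivAt νy (-((fby t)ᵀ *ᵥ νy t + (hby t)ᵀ *ᵥ νz t + ψy t)) t)
    (hadj2 : ∀ t ∈ Set.Ico (0:ℝ) T,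
      HasDerivAt νz (-((fbz t)ᵀ *ᵥ νy t + (hbz t)ᵀ *ᵥ νz t + ψz t)) t)
    -- terminal conditions
    (hνyT : νy T = ζy) (hνzT : νz T = ζz)
    -- sufficient smoothness for the integrals and integration by parts
    (hyc : Continuous y) (hYc : Continuous Y) (hY'c : Continuous Y')
    (hzc : Continuous z) (hZc : Continuous Z) (hZ'c : Continuous Z')
    (hψyc : Continuous ψy) (hψzc : Continuous ψz)
    (hνyc : Continuous νy) (hνzc : Continuous νz) :
    (∫ t in (0:ℝ)..T, (y t - Y t) ⬝ᵥ ψy t)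
      + (∫ t in (0:ℝ)..T, (z t - Z t) ⬝ᵥ ψz t)
      + (y T - Y T) ⬝ᵥ ζy + (z T - Z T) ⬝ᵥ ζz
    = νy 0 ⬝ᵥ (y 0 - Y 0) + νz 0 ⬝ᵥ (z 0 - Z 0)
      + (∫ t in (0:ℝ)..T, νy t ⬝ᵥ (f (Y t, Z t) - Y' t))
      + (∫ t in (0:ℝ)..T, νz t ⬝ᵥ (h (Y t, Z t) - Z' t)) := by
  set g : ℝ → ℝ := fun t => νy t ⬝ᵥ (y t - Y t) + νz t ⬝ᵥ (z t - Z t) with hg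
  set A : ℝ → ℝ := fun t => (y t - Y t) ⬝ᵥ ψy t with hA
  set B : ℝ → ℝ := fun t => (z t - Z t) ⬝ᵥ ψz t with hB
  set C : ℝ → ℝ := fun t => νy t ⬝ᵥ (f (Y t, Z t) - Y' t) with hC
  set D : ℝ → ℝ := fun t => νz t ⬝ᵥ (h (Y t, Z t) - Z' t) with hD
  set G : ℝ → ℝ := fun t => -A t - B t + C t + D t with hG
  -- continuity facts
  have hfYZ : Continuous (fun t => f (Y t, Z t)) :=
    hf.continuous.comp (hYc.prodMk hZc)
  have hhYZ : Continuous (fun t => h (Y t, Z t)) :=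
    hh.continuous.comp (hYc.prodMk hZc)
  have hAc : Continuous A := cont_dot (hyc.sub hYc) hψyc
  have hBc : Continuous B := cont_dot (hzc.sub hZc) hψzc
  have hCc : Continuous C := cont_dot hνyc (hfYZ.sub hY'c)
  have hDc : Continuous D := cont_dot hνzc (hhYZ.sub hZ'c)
  have hGc : Continuous G := (((hAc.neg.sub hBc).add hCc).add hDc)
  have hgc : Continuous g := (cont_dot hνyc (hyc.sub hYc)).add (cont_dot hνzc (hzc.sub hZc))
  -- derivative of g on the open interval
  have hderiv : ∀ t ∈ Set.Ioo (0:ℝ) T, HasDerivWithinAt g (G t) (Set.Ioi t) t := by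
    intro t ht
    have ht1 : t ∈ Set.Icc (0:ℝ) T := ⟨ht.1.le, ht.2.le⟩
    have ht2 : t ∈ Set.Ico (0:ℝ) T := ⟨ht.1.le, ht.2⟩
    have h1 := hasDerivAt_dot (hadj1 t ht2) ((hy t ht1).sub (hY t ht1))
    have h2 := hasDerivAt_dot (hadj2 t ht2) ((hz t ht1).sub (hZ t ht1))
    have key := (h1.add h2)
    have heq :
        (-((fby t)ᵀ *ᵥ νy t + (hby t)ᵀ *ᵥ νz t + ψy t)) ⬝ᵥ (y t - Y t)
          + νy t ⬝ᵥ (f (y t, z t) - Y' t)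
        + ((-((fbz t)ᵀ *ᵥ νy t + (hbz t)ᵀ *ᵥ νz t + ψz t)) ⬝ᵥ (z t - Z t)
          + νz t ⬝ᵥ (h (y t, z t) - Z' t)) = G t := by
      have e1 : f (y t, z t) - Y' t
          = (fby t *ᵥ (y t - Y t) + fbz t *ᵥ (z t - Z t)) + (f (Y t, Z t) - Y' t) := by
        rw [hlinf t]; abel
      have e2 : h (y t, z t) - Z' t
          = (hby t *ᵥ (y t - Y t) + hbz t *ᵥ (z t - Z t)) + (h (Y t, Z t) - Z' t) := by
        rw [hlinh t]; abel
      rw [e1, e2]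
      simp only [hG, hA, hB, hC, hD, add_dotProduct, neg_dotProduct,
        dotProduct_add, dot_mulVec_trans, dotProduct_comm (ψy t),
        dotProduct_comm (ψz t)]
      ring
    exact (heq ▸ key).hasDerivWithinAt
  -- FTC
  have hint : IntervalIntegrable G volume 0 T := Continuous.intervalIntegrable hGc 0 T
  have hftc : ∫ t in (0:ℝ)..T, G t = g T - g 0 :=
    intervalIntegral.integral_eq_sub_of_hasDeriv_right_of_le hT.le hgc.continuousOn
      hderiv hint
  -- split the integral
  have hIA : IntervalIntegrable A volume 0 T := Continuous.intervalIntegrable hAc 0 T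
  have hIB : IntervalIntegrable B volume 0 T := Continuous.intervalIntegrable hBc 0 T
  have hIC : IntervalIntegrable C volume 0 T := Continuous.intervalIntegrable hCc 0 T
  have hID : IntervalIntegrable D volume 0 T := Continuous.intervalIntegrable hDc 0 T
  have hsplit : ∫ t in (0:ℝ)..T, G t
      = -(∫ t in (0:ℝ)..T, A t) - (∫ t in (0:ℝ)..T, B t)
        + (∫ t in (0:ℝ)..T, C t) + (∫ t in (0:ℝ)..T, D t) := by
    have i1 : IntervalIntegrable (fun t => -A t) volume 0 T := hIA.neg
    have i2 : IntervalIntegrable (fun t => -A t - B t) volume 0 T := i1.sub hIB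
    have i3 : IntervalIntegrable (fun t => -A t - B t + C t) volume 0 T := i2.add hIC
    rw [show (∫ t in (0:ℝ)..T, G t) = ∫ t in (0:ℝ)..T, ((-A t - B t + C t) + D t) from rfl,
      intervalIntegral.integral_add i3 hID, intervalIntegral.integral_add i2 hIC,
      intervalIntegral.integral_sub i1 hIB, intervalIntegral.integral_neg]
  rw [hsplit] at hftc
  have hgT : g T = ζy ⬝ᵥ (y T - Y T) + ζz ⬝ᵥ (z T - Z T) := by
    simp [hg, hνyT, hνzT]
  rw [hgT] at hftc
  have c1 : (y T - Y T) ⬝ᵥ ζy = ζy ⬝ᵥ (y T - Y T) := dotProduct_comm _ _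
  have c2 : (z T - Z T) ⬝ᵥ ζz = ζz ⬝ᵥ (z T - Z T) := dotProduct_comm _ _
  simp only [hg] at hftc
  linarith [hftc]
end
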